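/- Let X be a uniformly convex real Banach space and let p > 1. Then for every r > 0 and ε > 0 there exists C > 0 such that for all x, y ∈ X with ‖x‖ ≤ r and ‖x − y‖ ≥ ε, one has 2^(p−1)‖x‖^p + 2^(p−1)‖y‖^p − ‖x+y‖^p ≥ C·‖x − y‖^p. -/

import Mathlib

open Real Set

/-- Real superadditivity of rpow. -/
lemma aux_rpow_superadd {p : ℝ} (hp : 1 ≤ p) {a b : ℝ} (ha : 0 ≤ a) (hb : 0 ≤ b) :
    a ^ p + b ^ p ≤ (a + b) ^ p := by
  have h := NNReal.add_rpow_le_rpow_add a.toNNReal b.toNNReal hp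
  have := NNReal.coe_le_coe.2 h
  simpa [NNReal.coe_rpow, Real.coe_toNNReal, ha, hb, add_nonneg ha hb,
    Real.coe_toNNReal a ha, Real.coe_toNNReal b hb] using this

/-- The key scalar gap lemma. -/
lemma aux_scalar_gap (p : ℝ) (hp : 1 < p) (η : ℝ) (hη : 0 < η) (hη1 : η ≤ 1) :
    ∃ c : ℝ, 0 < c ∧ ∀ a b : ℝ, 0 ≤ a → 0 ≤ b → η * (a + b) ≤ |a - b| →
      (1 + c) * (a + b) ^ p ≤ 2 ^ (p - 1) * (a ^ p + b ^ p) := by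
  have hp0 : (0:ℝ) < p := lt_trans one_pos hp
  set f : ℝ → ℝ := fun l => 2 ^ (p - 1) * (l ^ p + (1 - l) ^ p) with hf
  have hcont : Continuous f := by
    apply Continuous.mul continuous_const
    apply Continuous.add
    · exact continuous_iff_continuousAt.2 fun x =>
        Real.continuousAt_rpow_const x p (Or.inr hp0.le)
    · exact (continuous_iff_continuousAt.2 fun x =>
        Real.continuousAt_rpow_const x p (Or.inr hp0.le)).comp (continuous_const.sub continuous_id)
  set S : Set ℝ := Icc (0:ℝ) 1 ∩ {l : ℝ | η ≤ |2 * l - 1|} with hS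
  have hScpt : IsCompact S :=
    isCompact_Icc.inter_right (isClosed_le continuous_const ((continuous_const.mul continuous_id).sub continuous_const).abs)
  have hSne : S.Nonempty := ⟨0, ⟨by norm_num, by simp; linarith⟩⟩
  obtain ⟨l₀, hl₀S, hmin⟩ := hScpt.exists_isMinOn hSne hcont.continuousOn
  have hfl₀ : 1 < f l₀ := by
    obtain ⟨⟨hl0, hl1⟩, habs⟩ := hl₀S
    have hne : l₀ ≠ 1 - l₀ := by
      intro h
      have : l₀ = 1/2 := by linarith
      rw [this] at habs
      simp at habs
      linarith
    have := (strictConvexOn_rpow hp).2 (mem_Ici.2 hl0) (mem_Ici.2 (by linarith : (0:ℝ) ≤ 1 - l₀))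
      hne (by norm_num : (0:ℝ) < 1/2) (by norm_num : (0:ℝ) < 1/2) (by norm_num)
    have harg : ((1:ℝ)/2) • l₀ + ((1:ℝ)/2) • (1 - l₀) = 1/2 := by
      simp only [smul_eq_mul]; ring
    rw [harg] at this
    have h2 : ((1:ℝ)/2) ^ p < (1/2) * l₀ ^ p + (1/2) * (1 - l₀) ^ p := by
      simpa [smul_eq_mul] using this
    have hpow : (2:ℝ) ^ (p - 1) = 2 ^ p / 2 := by
      rw [Real.rpow_sub (by norm_num : (0:ℝ) < 2), Real.rpow_one]
    have h2p : ((1:ℝ)/2) ^ p = ((2:ℝ) ^ p)⁻¹ := by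
      rw [one_div, Real.inv_rpow (by norm_num : (0:ℝ) ≤ 2)]
    have h2ppos : (0:ℝ) < 2 ^ p := Real.rpow_pos_of_pos (by norm_num) p
    rw [hf]
    simp only
    rw [hpow]
    rw [h2p] at h2
    calc (1:ℝ) = 2 ^ p * ((2:ℝ)^p)⁻¹ := by field_simp
    _ < 2 ^ p * ((1/2) * l₀ ^ p + (1/2) * (1 - l₀) ^ p) := by
        apply mul_lt_mul_of_pos_left h2 h2ppos
    _ = 2 ^ p / 2 * (l₀ ^ p + (1 - l₀) ^ p) := by ring
  refine ⟨f l₀ - 1, by linarith, ?_⟩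
  intro a b ha hb hab
  rcases eq_or_lt_of_le (add_nonneg ha hb) with ht | ht
  · have ha0 : a = 0 := by linarith [abs_nonneg (a-b)]
    have hb0 : b = 0 := by linarith
    rw [ha0, hb0]
    simp [Real.zero_rpow (ne_of_gt hp0)]
  · set t := a + b with hT
    have hl : a / t ∈ S := by
      constructor
      · exact ⟨div_nonneg ha ht.le, (div_le_one ht).2 (by linarith)⟩
      · show η ≤ |2 * (a / t) - 1|
        have : 2 * (a / t) - 1 = (a - b) / t := by field_simp; ring
        rw [this, abs_div, abs_of_pos ht]
        rw [le_div_iff₀ ht]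
        linarith [hab]
    have hfl : f l₀ ≤ f (a / t) := hmin hl
    have key : (1 + (f l₀ - 1)) * t ^ p ≤ f (a / t) * t ^ p := by
      apply mul_le_mul_of_nonneg_right (by linarith) (Real.rpow_nonneg ht.le p)
    refine key.trans_eq ?_
    rw [hf]
    simp only
    have hat : (a / t) ^ p * t ^ p = a ^ p := by
      rw [← Real.mul_rpow (div_nonneg ha ht.le) ht.le, div_mul_cancel₀]
      exact ne_of_gt ht
    have hbt : (1 - a / t) ^ p * t ^ p = b ^ p := by
      have : 1 - a / t = b / t := by field_simp; rw [hT]; ring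
      rw [this, ← Real.mul_rpow (div_nonneg hb ht.le) ht.le, div_mul_cancel₀]
      exact ne_of_gt ht
    calc 2 ^ (p-1) * ((a/t)^p + (1-a/t)^p) * t^p
        = 2^(p-1) * ((a/t)^p * t^p + (1-a/t)^p * t^p) := by ring
      _ = 2^(p-1) * (a^p + b^p) := by rw [hat, hbt]


/-- (a+b)^p ≤ 2^(p-1)(a^p+b^p). -/
lemma aux_pow_add {p : ℝ} (hp : 1 ≤ p) {a b : ℝ} (ha : 0 ≤ a) (hb : 0 ≤ b) :
    (a + b) ^ p ≤ 2 ^ (p - 1) * (a ^ p + b ^ p) := by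
  have h := (convexOn_rpow hp).2 (mem_Ici.2 ha) (mem_Ici.2 hb)
    (by norm_num : (0:ℝ) ≤ 1/2) (by norm_num : (0:ℝ) ≤ 1/2) (by norm_num)
  simp only [smul_eq_mul] at h
  have harg : (1/2 : ℝ) * a + (1/2 : ℝ) * b = (a+b)/2 := by ring
  rw [harg] at h
  have h2 : ((a+b)/2) ^ p = (a+b)^p / 2^p := by
    rw [Real.div_rpow (add_nonneg ha hb) (by norm_num : (0:ℝ) ≤ 2)]
  rw [h2] at h
  have h2ppos : (0:ℝ) < 2 ^ p := Real.rpow_pos_of_pos (by norm_num) p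
  have hpow : (2:ℝ) ^ (p - 1) = 2 ^ p / 2 := by
    rw [Real.rpow_sub (by norm_num : (0:ℝ) < 2), Real.rpow_one]
  rw [hpow]
  rw [div_le_iff₀ h2ppos] at h
  nlinarith [h2ppos]

/-- If the norm of the Banach space `X` is uniformly convex and `p > 1`, then for all
`r, ε > 0` there is `C > 0` such that `‖x‖ ≤ r` and `‖x − y‖ ≥ ε` imply
`2^(p−1)‖x‖^p + 2^(p−1)‖y‖^p − ‖x+y‖^p ≥ C‖x−y‖^p`. -/
theorem stmt_18 {X : Type*} [NormedAddCommGroup X] [NormedSpace ℝ X] [CompleteSpace X]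
    (hUC : ∀ ε : ℝ, 0 < ε → ∃ δ : ℝ, 0 < δ ∧
      ∀ x y : X, ‖x‖ = 1 → ‖y‖ = 1 → ε ≤ ‖x - y‖ → ‖x + y‖ / 2 ≤ 1 - δ)
    (p : ℝ) (hp : 1 < p) :
    ∀ r ε : ℝ, 0 < r → 0 < ε → ∃ C : ℝ, 0 < C ∧
      ∀ x y : X, ‖x‖ ≤ r → ε ≤ ‖x - y‖ →
        C * ‖x - y‖ ^ p ≤ 2 ^ (p - 1) * ‖x‖ ^ p + 2 ^ (p - 1) * ‖y‖ ^ p - ‖x + y‖ ^ p := by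
  intro r ε hr hε
  have hp0 : (0:ℝ) < p := lt_trans one_pos hp
  -- uniform convexity at ε₀
  set ε₀ : ℝ := ε / (6 * r) with hε₀def
  have hε₀ : 0 < ε₀ := div_pos hε (by linarith)
  obtain ⟨δ, hδ, hUCp⟩ := hUC ε₀ hε₀
  set δ' : ℝ := min δ (1/2) with hδ'def
  have hδ'0 : 0 < δ' := lt_min hδ (by norm_num)
  have hδ'half : δ' ≤ 1/2 := min_le_right _ _
  -- scalar gap lemma
  set η : ℝ := min (1/2) (ε / (8 * r)) with hηdef
  have hη0 : 0 < η := lt_min (by norm_num) (div_pos hε (by linarith))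
  obtain ⟨c, hc, hL⟩ := aux_scalar_gap p hp η hη0 (le_trans (min_le_left _ _) (by norm_num))
  set cε : ℝ := δ' * ε / 2 with hcεdef
  have hcε0 : 0 < cε := by positivity
  have h4r : (0:ℝ) < 4 * r := by linarith
  have h4rp : (0:ℝ) < (4*r) ^ p := Real.rpow_pos_of_pos h4r p
  refine ⟨min c (cε ^ p / (4*r) ^ p), lt_min hc (by positivity), ?_⟩
  intro x y hx hxy
  set a : ℝ := ‖x‖ with hadef
  set b : ℝ := ‖y‖ with hbdef
  set d : ℝ := ‖x - y‖ with hddef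
  have ha : 0 ≤ a := norm_nonneg x
  have hb : 0 ≤ b := norm_nonneg y
  have hd0 : 0 < d := lt_of_lt_of_le hε hxy
  have hdab : d ≤ a + b := norm_sub_le x y
  have habd : |a - b| ≤ d := abs_norm_sub_norm_le x y
  have hxyp : ‖x + y‖ ^ p ≤ (a + b) ^ p :=
    Real.rpow_le_rpow (norm_nonneg _) (norm_add_le x y) hp0.le
  have hdp : d ^ p ≤ (a + b) ^ p := Real.rpow_le_rpow hd0.le hdab hp0.le
  -- the easy regime: apply the scalar gap lemma
  have easy : ∀ _ : η * (a + b) ≤ |a - b|,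
      min c (cε ^ p / (4*r) ^ p) * d ^ p ≤
        2 ^ (p - 1) * a ^ p + 2 ^ (p - 1) * b ^ p - ‖x + y‖ ^ p := by
    intro hcond
    have hgap := hL a b ha hb hcond
    have h1 : min c (cε ^ p / (4*r) ^ p) * d ^ p ≤ c * (a+b) ^ p := by
      apply mul_le_mul (min_le_left _ _) hdp (Real.rpow_nonneg hd0.le p) hc.le
    nlinarith [hgap, hxyp]
  by_cases h3 : 3 * a ≤ b
  · -- case A : b much larger than a
    apply easy
    have hab' : |a - b| = b - a := by
      rw [abs_of_nonpos (by linarith)]; ring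
    have : η * (a + b) ≤ (1/2) * (a + b) := by
      apply mul_le_mul_of_nonneg_right (min_le_left _ _) (by linarith)
    rw [hab']
    linarith
  · push_neg at h3
    have hb3r : b ≤ 3 * r := by linarith
    have hab4r : a + b ≤ 4 * r := by linarith
    by_cases h2 : ε / 2 ≤ |a - b|
    · -- case B1 : norms differ by at least ε/2, all bounded
      apply easy
      have : η * (a + b) ≤ (ε / (8*r)) * (4 * r) := by
        apply mul_le_mul (min_le_right _ _) hab4r (by linarith) (by positivity)
      have heq : (ε / (8*r)) * (4 * r) = ε / 2 := by field_simp; ring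
      linarith [this.trans_eq heq]
    · -- case B2 : the genuinely uniformly convex regime
      push_neg at h2
      have hm : ε / 4 ≤ min a b := by
        rcases le_total a b with hab | hab
        · have : |a - b| = b - a := by rw [abs_of_nonpos (by linarith)]; ring
          rw [min_eq_left hab]
          linarith [hxy, hdab, h2, this ▸ h2]
        · have : |a - b| = a - b := abs_of_nonneg (by linarith)
          rw [min_eq_right hab]
          linarith [this ▸ h2]
      set m : ℝ := min a b with hmdef
      have hm0 : 0 < m := lt_of_lt_of_le (by linarith) hm
      have ha0 : 0 < a := lt_of_lt_of_le hm0 (min_le_left _ _)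
      have hb0 : 0 < b := lt_of_lt_of_le hm0 (min_le_right _ _)
      set u : X := a⁻¹ • x with hudef
      set v : X := b⁻¹ • y with hvdef
      have hxu : a • u = x := by
        rw [hudef, smul_smul, mul_inv_cancel₀ (ne_of_gt ha0), one_smul]
      have hyv : b • v = y := by
        rw [hvdef, smul_smul, mul_inv_cancel₀ (ne_of_gt hb0), one_smul]
      have hu : ‖u‖ = 1 := by
        rw [hudef, norm_smul, norm_inv, Real.norm_eq_abs, abs_of_pos ha0, ← hadef,
          inv_mul_cancel₀ (ne_of_gt ha0)]
      have hv : ‖v‖ = 1 := by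
        rw [hvdef, norm_smul, norm_inv, Real.norm_eq_abs, abs_of_pos hb0, ← hbdef,
          inv_mul_cancel₀ (ne_of_gt hb0)]
      -- lower bound on ‖u - v‖
      have hkey : d - |a - b| ≤ b * ‖u - v‖ := by
        have hbuv : b • (u - v) = (x - y) + ((b-a) * a⁻¹) • x := by
          rw [smul_sub, hyv, hudef, smul_smul]
          have : b * a⁻¹ = 1 + (b - a) * a⁻¹ := by field_simp; ring
          rw [this, add_smul, one_smul]
          abel
        have hw : ‖((b-a) * a⁻¹) • x‖ = |a - b| := by
          rw [norm_smul, Real.norm_eq_abs, ← hadef, abs_mul, abs_inv,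
            abs_of_pos ha0]
          rw [abs_sub_comm]
          field_simp
        have htri : ‖x - y‖ - ‖((b-a) * a⁻¹) • x‖ ≤ ‖(x - y) + ((b-a) * a⁻¹) • x‖ := by
          have h := norm_sub_le ((x - y) + ((b-a) * a⁻¹) • x) (((b-a) * a⁻¹) • x)
          simp only [add_sub_cancel_right] at h
          linarith [norm_add_le ((x-y)) (((b-a) * a⁻¹) • x)]
        have hnb : ‖b • (u - v)‖ = b * ‖u - v‖ := by
          rw [norm_smul, Real.norm_eq_abs, abs_of_pos hb0]
        rw [← hnb, hbuv]
        calc d - |a - b| = ‖x - y‖ - ‖((b-a) * a⁻¹) • x‖ := by rw [← hddef, hw]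
          _ ≤ _ := htri
      have huv : ε₀ ≤ ‖u - v‖ := by
        have h1 : ε₀ * b ≤ d - |a - b| := by
          have : ε₀ * b ≤ (ε / (6*r)) * (3*r) := by
            apply mul_le_mul_of_nonneg_left hb3r hε₀.le
          have heq : (ε / (6*r)) * (3*r) = ε / 2 := by field_simp; ring
          have : ε₀ * b ≤ ε / 2 := this.trans_eq heq
          linarith [hxy, h2]
        have h2' : ε₀ * b ≤ b * ‖u - v‖ := le_trans h1 hkey
        rw [mul_comm] at h2'
        exact le_of_mul_le_mul_left h2' hb0
      have hUV : ‖u + v‖ ≤ 2 - 2 * δ' := by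
        have := hUCp u v hu hv huv
        have hδδ' : δ' ≤ δ := min_le_left _ _
        linarith
      -- decomposition bound on ‖x + y‖
      have hsum : ‖x + y‖ ≤ (a + b) - 2 * δ' * m := by
        have hdecomp : x + y = m • (u + v) + ((a - m) • u + (b - m) • v) := by
          rw [← hxu, ← hyv]
          module
        have hma : m ≤ a := min_le_left _ _
        have hmb : m ≤ b := min_le_right _ _
        calc ‖x + y‖ = ‖m • (u + v) + ((a - m) • u + (b - m) • v)‖ := by rw [← hdecomp]
          _ ≤ ‖m • (u + v)‖ + ‖(a - m) • u + (b - m) • v‖ := norm_add_le _ _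
          _ ≤ ‖m • (u + v)‖ + (‖(a - m) • u‖ + ‖(b - m) • v‖) := by
              linarith [norm_add_le ((a - m) • u) ((b - m) • v)]
          _ = m * ‖u + v‖ + ((a - m) + (b - m)) := by
              have n1 : ‖m • (u + v)‖ = m * ‖u + v‖ := by
                rw [norm_smul, Real.norm_eq_abs, abs_of_pos hm0]
              have n2 : ‖(a - m) • u‖ = a - m := by
                rw [norm_smul, hu, mul_one, Real.norm_eq_abs,
                  abs_of_nonneg (by linarith : (0:ℝ) ≤ a - m)]
              have n3 : ‖(b - m) • v‖ = b - m := by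
                rw [norm_smul, hv, mul_one, Real.norm_eq_abs,
                  abs_of_nonneg (by linarith : (0:ℝ) ≤ b - m)]
              rw [n1, n2, n3]
          _ ≤ m * (2 - 2 * δ') + ((a - m) + (b - m)) := by
              have := mul_le_mul_of_nonneg_left hUV hm0.le
              linarith
          _ = (a + b) - 2 * δ' * m := by ring
      -- conclude
      have hxyub : ‖x + y‖ ≤ (a + b) - cε := by
        have h1 : 2 * δ' * (ε/4) ≤ 2 * δ' * m := by
          apply mul_le_mul_of_nonneg_left hm (by positivity)
        have : cε = 2 * δ' * (ε/4) := by rw [hcεdef]; ring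
        linarith
      have hnn : (0:ℝ) ≤ (a + b) - cε := by
        have h1 : δ' * ε ≤ (1/2) * ε := mul_le_mul_of_nonneg_right hδ'half hε.le
        have h2'' : cε ≤ ε / 4 := by rw [hcεdef]; linarith
        linarith [hxy, hdab]
      have h1 : ‖x + y‖ ^ p ≤ ((a + b) - cε) ^ p :=
        Real.rpow_le_rpow (norm_nonneg _) hxyub hp0.le
      have h2' : ((a + b) - cε) ^ p + cε ^ p ≤ (a + b) ^ p := by
        have h := aux_rpow_superadd hp.le hnn hcε0.le
        have e : (a + b) - cε + cε = a + b := by ring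
        rwa [e] at h
      have h3' : (a + b) ^ p ≤ 2 ^ (p-1) * (a ^ p + b ^ p) := aux_pow_add hp.le ha hb
      have h4 : min c (cε ^ p / (4*r) ^ p) * d ^ p ≤ cε ^ p := by
        have hdp' : d ^ p ≤ (4*r) ^ p :=
          Real.rpow_le_rpow hd0.le (by linarith) hp0.le
        calc min c (cε ^ p / (4*r) ^ p) * d ^ p
            ≤ (cε ^ p / (4*r) ^ p) * (4*r) ^ p := by
              apply mul_le_mul (min_le_right _ _) hdp' (Real.rpow_nonneg hd0.le p)
                (by positivity)
          _ = cε ^ p := div_mul_cancel₀ _ (ne_of_gt h4rp)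
      have hdist : (2:ℝ) ^ (p-1) * (a ^ p + b ^ p)
          = 2 ^ (p-1) * a ^ p + 2 ^ (p-1) * b ^ p := by ring
      linarith
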